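/- Let A be Hurwitz, 𝓟 = 𝓟ᵀ > 0 solve Aᵀ𝓟 + 𝓟A = −Q with Q > 0. Consider V(X, μ̃) = (1/2)Xᵀ𝓟X + (1/2)⟨μ̃,μ̃⟩_P along solutions of Ẋ = AX + B((𝓗X)∘(Πⁿμ̃) + v + d) with parameter update μ̃' = −((𝓗X)Πⁿ)* Bᵀ𝓟X. Then V̇ = −(1/2)XᵀQX + Xᵀ𝓟B(v + d); i.e., the adaptive term exactly cancels the parameter-error contribution. -/

import Mathlib

open Matrix
open scoped RealInnerProductSpace

/-- The Lyapunov derivative computation of Theorem 4: with `A` Hurwitz,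
`𝓟 = 𝓟ᵀ > 0` solving `Aᵀ𝓟 + 𝓟A = −Q`, `Q > 0`, along solutions of
`Ẋ = AX + B((𝓗X)∘(Πⁿμ̃) + v + d)` with parameter update
`μ̃' = −((𝓗X)Πⁿ)* Bᵀ𝓟X`, the function `V = (1/2)Xᵀ𝓟X + (1/2)⟨μ̃,μ̃⟩` satisfies
`V̇ = −(1/2)XᵀQX + Xᵀ𝓟B(v + d)`: the adaptive term exactly cancels the
parameter-error contribution. -/
theorem stmt15 {m q : ℕ} {P : Type*} [NormedAddCommGroup P] [InnerProductSpace ℝ P]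
    (A Pm Q : Matrix (Fin m) (Fin m) ℝ) (Bm : Matrix (Fin m) (Fin q) ℝ)
    (hHurwitz : ∀ z ∈ spectrum ℂ (A.map (algebraMap ℝ ℂ)), z.re < 0)
    (hPsymm : Pm.IsSymm) (hPpos : Pm.PosDef) (hQpos : Q.PosDef)
    (hLyap : A.transpose * Pm + Pm * A = -Q)
    -- `G t = (𝓗X)(t)` acting on parameters, `Pn = Πⁿ` an orthogonal projection
    (G : ℝ → P →L[ℝ] (Fin q → ℝ))
    (Pn : P →L[ℝ] P) (hPn : Pn.comp Pn = Pn)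
    (hPnsa : ∀ p p' : P, ⟪Pn p, p'⟫ = ⟪p, Pn p'⟫)
    (X : ℝ → Fin m → ℝ) (mt : ℝ → P) (mtdot : ℝ → P) (v d : ℝ → Fin q → ℝ) (t : ℝ)
    (hX : HasDerivAt X (A.mulVec (X t) + Bm.mulVec ((G t) (Pn (mt t)) + v t + d t)) t)
    (hmt : HasDerivAt mt (mtdot t) t)
    -- the update law `μ̃' = −((𝓗X)Πⁿ)* Bᵀ𝓟X`, characterized via the adjoint identity
    (hupdate : ∀ p : P,
      ⟪mtdot t, p⟫ = -((Bm.transpose.mulVec (Pm.mulVec (X t))) ⬝ᵥ (G t) (Pn p))) :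
    HasDerivAt (fun s => (1 / 2) * (X s ⬝ᵥ Pm.mulVec (X s)) + (1 / 2) * ⟪mt s, mt s⟫)
      (-(1 / 2) * (X t ⬝ᵥ Q.mulVec (X t)) +
        (X t ⬝ᵥ Pm.mulVec (Bm.mulVec (v t + d t)))) t := by
  set Xd : Fin m → ℝ := A.mulVec (X t) + Bm.mulVec ((G t) (Pn (mt t)) + v t + d t) with hXd
  have hXi : ∀ i, HasDerivAt (fun s => X s i) (Xd i) t := hasDerivAt_pi.mp hX
  -- derivative of each component of Pm *ᵥ X
  have hPXi : ∀ i, HasDerivAt (fun s => Pm.mulVec (X s) i) (Pm.mulVec Xd i) t := by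
    intro i
    simpa [Matrix.mulVec, dotProduct] using
      HasDerivAt.fun_sum (fun j (_ : j ∈ Finset.univ) => (hXi j).const_mul (Pm i j))
  -- derivative of the quadratic form
  have h1 : HasDerivAt (fun s => X s ⬝ᵥ Pm.mulVec (X s))
      (Xd ⬝ᵥ Pm.mulVec (X t) + X t ⬝ᵥ Pm.mulVec Xd) t := by
    simpa [dotProduct, Finset.sum_add_distrib] using
      HasDerivAt.fun_sum (fun i (_ : i ∈ Finset.univ) => (hXi i).mul (hPXi i))
  have h2 : HasDerivAt (fun s => ⟪mt s, mt s⟫) (⟪mt t, mtdot t⟫ + ⟪mtdot t, mt t⟫) t :=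
    hmt.inner ℝ hmt
  have hmain := (h1.const_mul ((1:ℝ)/2)).add (h2.const_mul ((1:ℝ)/2))
  convert hmain using 1
  case e'_4 => rfl
  case e'_5 => rfl
  case e'_8 => rfl
  -- now prove the derivative values agree
  have hsym : ∀ u w : Fin m → ℝ, u ⬝ᵥ Pm.mulVec w = w ⬝ᵥ Pm.mulVec u := by
    intro u w
    rw [Matrix.dotProduct_mulVec, ← Matrix.mulVec_transpose, hPsymm.eq,
      dotProduct_comm]
  have eQ : X t ⬝ᵥ Pm.mulVec (A.mulVec (X t)) = -(1/2) * (X t ⬝ᵥ Q.mulVec (X t)) := by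
    have h := congrArg (fun M : Matrix (Fin m) (Fin m) ℝ => X t ⬝ᵥ M.mulVec (X t)) hLyap
    simp only [Matrix.add_mulVec, dotProduct_add, Matrix.neg_mulVec,
      dotProduct_neg, ← Matrix.mulVec_mulVec] at h
    have h2' : X t ⬝ᵥ A.transpose.mulVec (Pm.mulVec (X t))
        = X t ⬝ᵥ Pm.mulVec (A.mulVec (X t)) := by
      rw [Matrix.dotProduct_mulVec, Matrix.vecMul_transpose, hsym]
    rw [h2'] at h
    linarith
  have ecanc : ∀ y : Fin q → ℝ, X t ⬝ᵥ Pm.mulVec (Bm.mulVec y)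
      = Bm.transpose.mulVec (Pm.mulVec (X t)) ⬝ᵥ y := by
    intro y
    rw [Matrix.dotProduct_mulVec, Matrix.dotProduct_mulVec, ← Matrix.mulVec_transpose Pm,
      ← Matrix.mulVec_transpose Bm, hPsymm.eq]
  have hupd := hupdate (mt t)
  have hcomm : ⟪mt t, mtdot t⟫ = ⟪mtdot t, mt t⟫ := real_inner_comm _ _
  have e1 : Xd ⬝ᵥ Pm.mulVec (X t) = X t ⬝ᵥ Pm.mulVec Xd := hsym _ _
  rw [e1, hXd]
  simp only [Matrix.mulVec_add, dotProduct_add]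
  rw [eQ, hcomm, hupd, ← ecanc]
  ring
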